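/- Let x : [0,η] → ℝ^k be a continuously differentiable trajectory with x(0) in the restricted admissible set A_r = {y : x_lb + μ_dec < y < x_ub − μ_inc} (componentwise). Suppose that whenever x(t) lies in the admissible set A = {y : x_lb ≤ y ≤ x_ub}, the derivative satisfies ẋ_min ≤ ẋ(t) ≤ x_max componentwise, where μ_dec = |min(0, η·ẋ_min)| and μ_inc = |max(0, η·ẋ_max)| componentwise. Then x(t) ∈ A for all t ∈ [0,η]. -/

import Mathlib

/-- Lemma 1: starting in the restricted admissible set, the trajectory
stays in the admissible set for one control period. -/
theorem stmt_4 {k : ℕ} (η : ℝ) (hη : 0 < η)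
    (x x' : ℝ → (Fin k → ℝ))
    (hx : ∀ t ∈ Set.Icc (0 : ℝ) η, HasDerivAt x (x' t) t)
    (hx'c : ContinuousOn x' (Set.Icc 0 η))
    (xlb xub dmin dmax μdec μinc : Fin k → ℝ)
    (hμdec : ∀ i, μdec i = |min 0 (η * dmin i)|)
    (hμinc : ∀ i, μinc i = |max 0 (η * dmax i)|)
    (h0 : ∀ i, xlb i + μdec i < x 0 i ∧ x 0 i < xub i - μinc i)
    (hder : ∀ t ∈ Set.Icc (0 : ℝ) η,
      (∀ i, xlb i ≤ x t i ∧ x t i ≤ xub i) →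
      ∀ i, dmin i ≤ x' t i ∧ x' t i ≤ dmax i) :
    ∀ t ∈ Set.Icc (0 : ℝ) η, ∀ i, xlb i ≤ x t i ∧ x t i ≤ xub i := by
  by_contra hcon
  push_neg at hcon
  obtain ⟨t₁, ht₁, hbad⟩ := hcon
  -- the set of "bad" times
  set F : Set ℝ := {t | t ∈ Set.Icc (0:ℝ) η ∧ ∃ i, ¬ (xlb i ≤ x t i ∧ x t i ≤ xub i)} with hF
  have hFne : F.Nonempty := by
    refine ⟨t₁, ht₁, ?_⟩
    obtain ⟨i, hi⟩ := hbad
    exact ⟨i, fun h => (by rcases hi h.1 with h2; exact absurd h.2 (not_le.2 h2))⟩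
  have hFbdd : BddBelow F := ⟨0, fun t ht => ht.1.1⟩
  set t0 := sInf F with ht0def
  have ht0cl : t0 ∈ closure F := csInf_mem_closure hFne hFbdd
  have hFsub : F ⊆ Set.Icc (0:ℝ) η := fun t ht => ht.1
  have ht0Icc : t0 ∈ Set.Icc (0:ℝ) η :=
    (isClosed_Icc.closure_subset_iff.2 hFsub) ht0cl
  -- before t0 everything is admissible
  have hlt : ∀ t, 0 ≤ t → t < t0 → ∀ i, xlb i ≤ x t i ∧ x t i ≤ xub i := by
    intro t ht0 htlt
    by_contra hb
    push_neg at hb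
    obtain ⟨i, hi⟩ := hb
    have : t ∈ F := ⟨⟨ht0, le_trans htlt.le ht0Icc.2⟩,
      ⟨i, fun h => absurd h.2 (not_le.2 (hi h.1))⟩⟩
    exact absurd (csInf_le hFbdd this) (not_le.2 htlt)
  have hIccsub : Set.Icc (0:ℝ) t0 ⊆ Set.Icc (0:ℝ) η :=
    Set.Icc_subset_Icc le_rfl ht0Icc.2
  -- derivative bounds hold on the interior of [0, t0]
  have hderint : ∀ t ∈ Set.Ioo (0:ℝ) t0, ∀ i, dmin i ≤ x' t i ∧ x' t i ≤ dmax i := by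
    intro t ht
    exact hder t (hIccsub ⟨ht.1.le, ht.2.le⟩) (hlt t ht.1.le ht.2)
  -- component derivatives
  have hcomp : ∀ i, ∀ t ∈ Set.Icc (0:ℝ) η,
      HasDerivAt (fun s => x s i) (x' t i) t := by
    intro i t ht
    exact (ContinuousLinearMap.proj (R := ℝ) (φ := fun _ : Fin k => ℝ) i).hasFDerivAt.comp_hasDerivAt
      t (hx t ht)
  have hcontx : ∀ i, ContinuousOn (fun s => x s i) (Set.Icc (0:ℝ) t0) := by
    intro i t ht
    exact (hcomp i t (hIccsub ht)).continuousAt.continuousWithinAt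
  have hintIoo : interior (Set.Icc (0:ℝ) t0) = Set.Ioo 0 t0 := interior_Icc
  -- lower bound: x t0 i ≥ x 0 i + dmin i * t0
  have hlow : ∀ i, x 0 i + dmin i * t0 ≤ x t0 i := by
    intro i
    have hmono : MonotoneOn (fun s => x s i - dmin i * s) (Set.Icc (0:ℝ) t0) := by
      apply monotoneOn_of_deriv_nonneg (convex_Icc 0 t0)
      · exact (hcontx i).sub (continuousOn_const.mul continuousOn_id)
      · intro t ht
        rw [hintIoo] at ht
        exact ((hcomp i t (hIccsub ⟨ht.1.le, ht.2.le⟩)).sub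
          ((hasDerivAt_id t).const_mul (dmin i))).differentiableAt.differentiableWithinAt
      · intro t ht
        rw [hintIoo] at ht
        have hd := (hcomp i t (hIccsub ⟨ht.1.le, ht.2.le⟩)).sub
          ((hasDerivAt_id t).const_mul (dmin i))
        simp only [id_eq] at hd
        rw [HasDerivAt.deriv (f := fun s => x s i - dmin i * s) hd]
        simp only [mul_one]
        linarith [(hderint t ht i).1]
    have := hmono (Set.left_mem_Icc.2 ht0Icc.1) (Set.right_mem_Icc.2 ht0Icc.1) ht0Icc.1
    simp only [mul_zero, sub_zero] at this
    linarith
  -- upper bound: x t0 i ≤ x 0 i + dmax i * t0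
  have hhigh : ∀ i, x t0 i ≤ x 0 i + dmax i * t0 := by
    intro i
    have hmono : MonotoneOn (fun s => dmax i * s - x s i) (Set.Icc (0:ℝ) t0) := by
      apply monotoneOn_of_deriv_nonneg (convex_Icc 0 t0)
      · exact (continuousOn_const.mul continuousOn_id).sub (hcontx i)
      · intro t ht
        rw [hintIoo] at ht
        exact (((hasDerivAt_id t).const_mul (dmax i)).sub
          (hcomp i t (hIccsub ⟨ht.1.le, ht.2.le⟩))).differentiableAt.differentiableWithinAt
      · intro t ht
        rw [hintIoo] at ht
        have hd := ((hasDerivAt_id t).const_mul (dmax i)).sub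
          (hcomp i t (hIccsub ⟨ht.1.le, ht.2.le⟩))
        simp only [id_eq] at hd
        rw [HasDerivAt.deriv (f := fun s => dmax i * s - x s i) hd]
        simp only [mul_one]
        linarith [(hderint t ht i).2]
    have := hmono (Set.left_mem_Icc.2 ht0Icc.1) (Set.right_mem_Icc.2 ht0Icc.1) ht0Icc.1
    simp only [mul_zero, zero_sub] at this
    linarith
  -- x t0 is strictly inside
  have hstrict : ∀ i, xlb i < x t0 i ∧ x t0 i < xub i := by
    intro i
    constructor
    · have h1 := (h0 i).1
      have h2 := hlow i
      have h3 : min 0 (η * dmin i) ≤ t0 * dmin i := by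
        rcases le_or_gt 0 (dmin i) with h | h
        · exact le_trans (min_le_left _ _) (mul_nonneg ht0Icc.1 h)
        · exact le_trans (min_le_right _ _) (mul_le_mul_of_nonpos_right ht0Icc.2 h.le)
      have h4 : μdec i = -(min 0 (η * dmin i)) := by
        rw [hμdec i, abs_of_nonpos (min_le_left _ _)]
      nlinarith
    · have h1 := (h0 i).2
      have h2 := hhigh i
      have h3 : t0 * dmax i ≤ max 0 (η * dmax i) := by
        rcases le_or_gt 0 (dmax i) with h | h
        · exact le_trans (mul_le_mul_of_nonneg_right ht0Icc.2 h) (le_max_right _ _)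
        · exact le_trans (mul_nonpos_of_nonneg_of_nonpos ht0Icc.1 h.le) (le_max_left _ _)
      have h4 : μinc i = max 0 (η * dmax i) := by
        rw [hμinc i, abs_of_nonneg (le_max_left _ _)]
      nlinarith
  -- but points of F accumulate at t0, contradiction with continuity
  have hev : ∀ᶠ t in nhds t0, ∀ i, xlb i < x t i ∧ x t i < xub i := by
    rw [Filter.eventually_all]
    intro i
    have hc : ContinuousAt (fun s => x s i) t0 := (hcomp i t0 ht0Icc).continuousAt
    have h1 : ∀ᶠ t in nhds t0, xlb i < x t i :=
      continuousAt_const.eventually_lt hc (hstrict i).1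
    have h2 : ∀ᶠ t in nhds t0, x t i < xub i :=
      hc.eventually_lt continuousAt_const (hstrict i).2
    exact h1.and h2
  have hfreq : ∃ᶠ t in nhds t0, t ∈ F := mem_closure_iff_frequently.1 ht0cl
  obtain ⟨t, htF, hts⟩ := (hfreq.and_eventually hev).exists
  obtain ⟨i, hi⟩ := htF.2
  exact hi ⟨(hts i).1.le, (hts i).2.le⟩
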